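/- Let k ≥ 2 be an integer. The set of complex fixed points of the Dickson polynomial D_k (solutions of D_k(x) = x in ℂ) has exactly k elements, and it equals the union {α(a/(k−1)) : a ∈ ℤ} ∪ {α(a/(k+1)) : a ∈ ℤ}, where α(σ) = 2cos(2πσ). -/

import Mathlib

noncomputable def dickson : ℕ → ℂ → ℂ
  | 0, _ => 2
  | 1, x => x
  | (k+2), x => x * dickson (k+1) x - dickson k x

noncomputable def alpha (σ : ℝ) : ℂ :=
  Complex.exp (2 * Real.pi * Complex.I * σ) + Complex.exp (-(2 * Real.pi * Complex.I * σ))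

noncomputable def D (n : ℕ) : Polynomial ℂ := Polynomial.dickson 1 1 n

lemma dickson_eq_eval : ∀ (n : ℕ) (x : ℂ), dickson n x = (D n).eval x
  | 0, x => by simp [dickson, D, Polynomial.dickson_zero]; norm_num
  | 1, x => by simp [dickson, D]
  | (n+2), x => by
      rw [dickson, D, Polynomial.dickson_add_two, dickson_eq_eval (n+1) x, dickson_eq_eval n x]
      simp [D]

lemma dickson_add_inv (z w : ℂ) (h : z * w = 1) (n : ℕ) :
    dickson n (z + w) = z ^ n + w ^ n := by
  rw [dickson_eq_eval, D, Polynomial.dickson_one_one_eval_add_inv z w h]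

lemma dickson_monic : ∀ n : ℕ, (D (n+1)).Monic ∧ (D (n+1)).natDegree = n+1
  | 0 => by simp [D, Polynomial.monic_X]
  | 1 => by
      have h2 : D 2 = Polynomial.X ^ 2 - Polynomial.C 2 := by
        rw [D, Polynomial.dickson_two]
        push_cast
        ring_nf
        rw [show (2:ℂ) = ((2:ℕ):ℂ) by norm_num, Polynomial.C_eq_natCast]
        norm_num
      rw [h2]
      constructor
      · apply Polynomial.monic_X_pow_sub
        rw [Polynomial.degree_C (by norm_num)]
        norm_num
      · rw [Polynomial.natDegree_sub_eq_left_of_natDegree_lt] <;>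
          simp [Polynomial.natDegree_C, Polynomial.natDegree_X_pow]
  | (n+2) => by
      obtain ⟨hm1, hd1⟩ := dickson_monic n
      obtain ⟨hm2, hd2⟩ := dickson_monic (n+1)
      have hD : D (n+3) = Polynomial.X * D (n+2) - D (n+1) := by
        rw [D, Polynomial.dickson_add_two]; simp [D]
      have hmX : (Polynomial.X * D (n+2)).Monic := Polynomial.monic_X.mul hm2
      have hdX : (Polynomial.X * D (n+2)).natDegree = n+3 := by
        rw [Polynomial.natDegree_mul Polynomial.X_ne_zero hm2.ne_zero, Polynomial.natDegree_X, hd2]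
        omega
      have hlt : (D (n+1)).degree < (Polynomial.X * D (n+2)).degree := by
        rw [Polynomial.degree_eq_natDegree hm1.ne_zero, Polynomial.degree_eq_natDegree hmX.ne_zero,
          hd1, hdX]
        exact_mod_cast (by omega : n + 1 < n + 3)
      rw [hD]
      refine ⟨hmX.sub_of_left hlt, ?_⟩
      rw [Polynomial.natDegree_sub_eq_left_of_natDegree_lt (by rw [hd1, hdX]; omega), hdX]

open Complex in
lemma exists_add_inv (x : ℂ) : ∃ z w : ℂ, z * w = 1 ∧ z + w = x := by
  obtain ⟨s, hs⟩ := IsAlgClosed.exists_pow_nat_eq (x^2 - 4) zero_lt_two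
  refine ⟨(x + s)/2, (x - s)/2, ?_, by ring⟩
  field_simp
  linear_combination -hs

open Complex in
lemma root_unity_iff (n : ℕ) (hn : n ≠ 0) (z : ℂ) :
    z ^ n = 1 ↔ ∃ a : ℤ, z = Complex.exp (2 * Real.pi * Complex.I * (a / n)) := by
  constructor
  · intro h
    haveI : NeZero n := ⟨hn⟩
    obtain ⟨i, hi, hiz⟩ := (Complex.isPrimitiveRoot_exp n hn).eq_pow_of_pow_eq_one h
    refine ⟨i, ?_⟩
    rw [← hiz, ← Complex.exp_nat_mul]
    congr 1
    have : (n:ℂ) ≠ 0 := Nat.cast_ne_zero.mpr hn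
    push_cast
    field_simp
  · rintro ⟨a, rfl⟩
    rw [← Complex.exp_nat_mul]
    have hnc : (n:ℂ) ≠ 0 := Nat.cast_ne_zero.mpr hn
    rw [show (n:ℂ) * (2 * Real.pi * Complex.I * (a/n)) = a * (2 * Real.pi * Complex.I) by
      field_simp]
    exact Complex.exp_int_mul_two_pi_mul_I a

lemma alpha_eq_cos (σ : ℝ) : alpha σ = ((2 * Real.cos (2 * Real.pi * σ) : ℝ) : ℂ) := by
  rw [alpha]
  have h1 : (2 * Real.pi * Complex.I * σ) = ((2 * Real.pi * σ : ℝ) : ℂ) * Complex.I := by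
    push_cast; ring
  rw [h1, ← neg_mul, ← Complex.two_cos, ← Complex.ofReal_cos]
  push_cast
  ring

lemma alpha_inj {σ τ : ℝ} (hσ : σ ∈ Set.Icc (0:ℝ) (1/2)) (hτ : τ ∈ Set.Icc (0:ℝ) (1/2))
    (h : alpha σ = alpha τ) : σ = τ := by
  rw [alpha_eq_cos, alpha_eq_cos] at h
  have h2 : Real.cos (2 * Real.pi * σ) = Real.cos (2 * Real.pi * τ) := by
    have := Complex.ofReal_inj.mp h
    linarith
  have hπ := Real.pi_pos
  have := Real.injOn_cos (Set.mem_Icc.mpr ⟨by nlinarith [hσ.1], by nlinarith [hσ.2]⟩)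
    (Set.mem_Icc.mpr ⟨by nlinarith [hτ.1], by nlinarith [hτ.2]⟩) h2
  nlinarith [this]

lemma key_nat (k j₁ j₂ : ℕ) (hk : 2 ≤ k) (h1 : j₁ < (k+1)/2) (h2 : 1 ≤ j₂)
    (h3 : j₂ ≤ k - (k+1)/2) (he : j₁ * (k+1) = j₂ * (k-1)) : False := by
  have he' : (j₁ : ℤ) * (k+1) = (j₂ : ℤ) * (k-1) := by
    have h1k : (1:ℕ) ≤ k := by omega
    exact_mod_cast he
  set d : ℤ := (j₂ : ℤ) - (j₁ : ℤ) with hd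
  have h2j : (2:ℤ) * j₁ = d * ((k:ℤ) - 1) := by linear_combination he'
  have hb : (2:ℤ) * j₁ ≤ (k:ℤ) - 1 := by
    have : 2 * j₁ + 1 ≤ k := by omega
    push_cast at this ⊢; omega
  have hk1 : (0:ℤ) < (k:ℤ) - 1 := by
    have : (2:ℤ) ≤ k := by exact_mod_cast hk
    omega
  have hd0 : 0 ≤ d := by nlinarith [Int.natCast_nonneg j₁]
  have hd1 : d ≤ 1 := by nlinarith
  interval_cases d
  · have : (j₁ : ℤ) = 0 := by omega
    have hj10 : j₁ = 0 := by exact_mod_cast this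
    omega
  · have h2j1 : 2 * j₁ + 1 = k := by
      have h' : (2:ℤ) * j₁ = (k:ℤ) - 1 := by omega
      omega
    omega

open Complex in
lemma desc_iff (n : ℕ) (hn : n ≠ 0) (x : ℂ) :
    (∃ z w : ℂ, z * w = 1 ∧ z + w = x ∧ z ^ n = 1) ↔
      ∃ a : ℤ, x = alpha ((a : ℝ) / (n : ℝ)) := by
  have hnc : (n:ℂ) ≠ 0 := Nat.cast_ne_zero.mpr hn
  constructor
  · rintro ⟨z, w, hzw, rfl, hz⟩
    obtain ⟨a, rfl⟩ := (root_unity_iff n hn z).mp hz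
    refine ⟨a, ?_⟩
    have hw : w = Complex.exp (-(2 * Real.pi * Complex.I * ((a:ℂ) / n))) := by
      rw [Complex.exp_neg]
      exact (inv_eq_of_mul_eq_one_right hzw).symm
    have harg : 2 * (Real.pi:ℂ) * Complex.I * ((a:ℂ) / n)
        = 2 * Real.pi * Complex.I * (((a:ℝ) / (n:ℝ) : ℝ) : ℂ) := by push_cast; ring
    rw [hw, alpha, harg]
  · rintro ⟨a, rfl⟩
    have harg : 2 * (Real.pi:ℂ) * Complex.I * ((a:ℂ) / n)
        = 2 * Real.pi * Complex.I * (((a:ℝ) / (n:ℝ) : ℝ) : ℂ) := by push_cast; ring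
    refine ⟨Complex.exp (2 * Real.pi * Complex.I * ((a:ℂ) / n)),
      Complex.exp (-(2 * Real.pi * Complex.I * ((a:ℂ) / n))), ?_, ?_, ?_⟩
    · rw [← Complex.exp_add]; simp
    · rw [alpha, harg]
    · exact (root_unity_iff n hn _).mpr ⟨a, rfl⟩

lemma char_iff (m : ℕ) (x : ℂ) :
    dickson (m+2) x = x ↔
      ∃ z w : ℂ, z * w = 1 ∧ z + w = x ∧ (z ^ (m+1) = 1 ∨ z ^ (m+3) = 1) := by
  constructor
  · intro hx
    obtain ⟨z, w, hzw, hsum⟩ := exists_add_inv x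
    have h : z ^ (m+2) + w ^ (m+2) = z + w := by
      rw [← dickson_add_inv z w hzw, hsum, hx]
    have hp : (z*w) ^ (m+2) = 1 := by rw [hzw]; exact one_pow _
    have hfac : (z ^ (m+1) - 1) * (z ^ (m+3) - 1) = 0 := by
      linear_combination (z ^ (m+2)) * h - hp + (z ^ (m+1)) * hzw
    rcases mul_eq_zero.mp hfac with h1 | h1
    · exact ⟨z, w, hzw, hsum, Or.inl (sub_eq_zero.mp h1)⟩
    · exact ⟨z, w, hzw, hsum, Or.inr (sub_eq_zero.mp h1)⟩
  · rintro ⟨z, w, hzw, rfl, h | h⟩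
    · rw [dickson_add_inv z w hzw]
      have hw : w ^ (m+1) = 1 := by
        calc w ^ (m+1) = z ^ (m+1) * w ^ (m+1) := by rw [h, one_mul]
        _ = (z*w) ^ (m+1) := (mul_pow z w (m+1)).symm
        _ = 1 := by rw [hzw, one_pow]
      calc z ^ (m+2) + w ^ (m+2) = z ^ (m+1) * z + w ^ (m+1) * w := by ring
      _ = z + w := by rw [h, hw, one_mul, one_mul]
    · rw [dickson_add_inv z w hzw]
      have hw : w ^ (m+3) = 1 := by
        calc w ^ (m+3) = z ^ (m+3) * w ^ (m+3) := by rw [h, one_mul]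
        _ = (z*w) ^ (m+3) := (mul_pow z w (m+3)).symm
        _ = 1 := by rw [hzw, one_pow]
      have hz2 : z ^ (m+2) = w := by
        calc z ^ (m+2) = z ^ (m+3) * w := by linear_combination (-(z^(m+2))) * hzw
        _ = w := by rw [h, one_mul]
      have hw2 : w ^ (m+2) = z := by
        calc w ^ (m+2) = w ^ (m+3) * z := by linear_combination (-(w^(m+2))) * hzw
        _ = z := by rw [hw, one_mul]
      rw [hz2, hw2]; ring

theorem fix_dickson (k : ℕ) (hk : 2 ≤ k) :
    {x : ℂ | dickson k x = x} =
      ({x : ℂ | ∃ a : ℤ, x = alpha ((a : ℝ) / ((k : ℝ) - 1))} ∪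
        {x : ℂ | ∃ a : ℤ, x = alpha ((a : ℝ) / ((k : ℝ) + 1))}) ∧
    ({x : ℂ | dickson k x = x}).ncard = k := by
  obtain ⟨m, rfl⟩ : ∃ m, k = m + 2 := ⟨k - 2, by omega⟩
  have hc1 : ((m+2 : ℕ) : ℝ) - 1 = ((m+1 : ℕ) : ℝ) := by push_cast; ring
  have hc2 : ((m+2 : ℕ) : ℝ) + 1 = ((m+3 : ℕ) : ℝ) := by push_cast; ring
  have hmem : ∀ x : ℂ, dickson (m+2) x = x ↔
      ((∃ a : ℤ, x = alpha ((a : ℝ) / ((m+1 : ℕ) : ℝ))) ∨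
        (∃ a : ℤ, x = alpha ((a : ℝ) / ((m+3 : ℕ) : ℝ)))) := by
    intro x
    rw [char_iff]
    rw [← desc_iff (m+1) (by omega) x, ← desc_iff (m+3) (by omega) x]
    constructor
    · rintro ⟨z, w, h1, h2, h3 | h3⟩
      · exact Or.inl ⟨z, w, h1, h2, h3⟩
      · exact Or.inr ⟨z, w, h1, h2, h3⟩
    · rintro (⟨z, w, h1, h2, h3⟩ | ⟨z, w, h1, h2, h3⟩)
      · exact ⟨z, w, h1, h2, Or.inl h3⟩
      · exact ⟨z, w, h1, h2, Or.inr h3⟩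
  have hset : {x : ℂ | dickson (m+2) x = x} =
      ({x : ℂ | ∃ a : ℤ, x = alpha ((a : ℝ) / (((m+2:ℕ) : ℝ) - 1))} ∪
        {x : ℂ | ∃ a : ℤ, x = alpha ((a : ℝ) / (((m+2:ℕ) : ℝ) + 1))}) := by
    ext x
    rw [Set.mem_union, Set.mem_setOf_eq, Set.mem_setOf_eq, Set.mem_setOf_eq, hc1, hc2]
    exact hmem x
  refine ⟨hset, ?_⟩
  -- cardinality
  set S := {x : ℂ | dickson (m+2) x = x} with hS
  -- upper bound via polynomial roots
  obtain ⟨hmon, hdeg⟩ := dickson_monic (m+1)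
  set Q : Polynomial ℂ := D (m+2) - Polynomial.X with hQ
  have hmQ : Q.Monic := by
    apply hmon.sub_of_left
    rw [Polynomial.degree_X, Polynomial.degree_eq_natDegree hmon.ne_zero, hdeg]
    exact_mod_cast (by omega : 1 < m + 2)
  have hdQ : Q.natDegree = m + 2 := by
    rw [hQ, Polynomial.natDegree_sub_eq_left_of_natDegree_lt, hdeg]
    rw [Polynomial.natDegree_X, hdeg]; omega
  have hQ0 : Q ≠ 0 := hmQ.ne_zero
  have hsub : S ⊆ ↑Q.roots.toFinset := by
    intro x hx
    have hxS : dickson (m+2) x = x := hx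
    rw [Finset.mem_coe, Multiset.mem_toFinset, Polynomial.mem_roots hQ0]
    show Q.eval x = 0
    rw [hQ, Polynomial.eval_sub, Polynomial.eval_X, ← dickson_eq_eval, hxS, sub_self]
  have hfin : S.Finite := Set.Finite.subset (Q.roots.toFinset.finite_toSet) hsub
  have hub : S.ncard ≤ m + 2 := by
    calc S.ncard ≤ (↑Q.roots.toFinset : Set ℂ).ncard :=
          Set.ncard_le_ncard hsub (Q.roots.toFinset.finite_toSet)
    _ = Q.roots.toFinset.card := Set.ncard_coe_finset _
    _ ≤ Multiset.card Q.roots := Multiset.toFinset_card_le _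
    _ ≤ Q.natDegree := Polynomial.card_roots' Q
    _ = m + 2 := hdQ
  -- lower bound via explicit points
  set a : ℕ := (m+3)/2 with haa
  set σ : Fin (m+2) → ℝ := fun t =>
    if (t:ℕ) < a then ((t:ℕ) : ℝ) / ((m+1 : ℕ) : ℝ)
    else ((((t:ℕ) - a + 1 : ℕ) : ℝ)) / ((m+3 : ℕ) : ℝ) with hσdef
  have hm1pos : (0:ℝ) < ((m+1:ℕ):ℝ) := by positivity
  have hm3pos : (0:ℝ) < ((m+3:ℕ):ℝ) := by positivity
  have hIcc : ∀ t : Fin (m+2), σ t ∈ Set.Icc (0:ℝ) (1/2) := by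
    intro t
    rw [hσdef]
    dsimp only
    split_ifs with ht
    · constructor
      · positivity
      · rw [div_le_iff₀ hm1pos]
        have h2j : 2 * (t:ℕ) ≤ m + 1 := by omega
        have := (Nat.cast_le (α := ℝ)).mpr h2j
        push_cast at this ⊢
        linarith
    · constructor
      · positivity
      · rw [div_le_iff₀ hm3pos]
        have h2j : 2 * ((t:ℕ) - a + 1) ≤ m + 3 := by
          have := t.isLt
          omega
        have := (Nat.cast_le (α := ℝ)).mpr h2j
        push_cast at this ⊢
        linarith
  have hσinj : Function.Injective σ := by
    intro t₁ t₂ hs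
    rw [hσdef] at hs
    dsimp only at hs
    have hlt1 := t₁.isLt
    have hlt2 := t₂.isLt
    split_ifs at hs with h1 h2 h2
    · -- A A
      have hnn : (t₁:ℕ) = (t₂:ℕ) := by
        field_simp at hs
        exact_mod_cast hs
      exact Fin.ext hnn
    · -- A B
      exfalso
      rw [div_eq_div_iff hm1pos.ne' hm3pos.ne'] at hs
      have he : (t₁:ℕ) * (m+3) = ((t₂:ℕ) - a + 1) * (m+1) := by exact_mod_cast hs
      exact key_nat (m+2) (t₁:ℕ) ((t₂:ℕ) - a + 1) (by omega) (by omega) (by omega)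
        (by omega)
        (by rw [show (m+2)+1 = m+3 by omega, show (m+2)-1 = m+1 by omega]; exact he)
    · -- B A
      exfalso
      rw [div_eq_div_iff hm3pos.ne' hm1pos.ne'] at hs
      have he : (t₂:ℕ) * (m+3) = ((t₁:ℕ) - a + 1) * (m+1) := by
        have := hs.symm
        exact_mod_cast this
      exact key_nat (m+2) (t₂:ℕ) ((t₁:ℕ) - a + 1) (by omega) (by omega) (by omega)
        (by omega)
        (by rw [show (m+2)+1 = m+3 by omega, show (m+2)-1 = m+1 by omega]; exact he)
    · -- B B
      have hnn : (t₁:ℕ) - a = (t₂:ℕ) - a := by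
        field_simp at hs
        have h' : (t₁:ℕ) - a + 1 = (t₂:ℕ) - a + 1 := by exact_mod_cast hs
        omega
      have : (t₁:ℕ) = (t₂:ℕ) := by omega
      exact Fin.ext this
  set f : Fin (m+2) → ℂ := fun t => alpha (σ t) with hfdef
  have hfinj : Function.Injective f := by
    intro t₁ t₂ hf
    exact hσinj (alpha_inj (hIcc t₁) (hIcc t₂) hf)
  have hfS : ∀ t, f t ∈ S := by
    intro t
    rw [hS, Set.mem_setOf_eq, hmem]
    rw [hfdef]
    dsimp only
    rw [hσdef]
    dsimp only
    split_ifs with ht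
    · exact Or.inl ⟨((t:ℕ) : ℤ), by norm_num⟩
    · exact Or.inr ⟨(((t:ℕ) - a + 1 : ℕ) : ℤ), by norm_num⟩
  have hlb : m + 2 ≤ S.ncard := by
    have hcard : ((Finset.univ : Finset (Fin (m+2))).image f).card = m + 2 := by
      rw [Finset.card_image_of_injective _ hfinj, Finset.card_univ, Fintype.card_fin]
    calc m + 2 = (((Finset.univ : Finset (Fin (m+2))).image f : Finset ℂ) : Set ℂ).ncard := by
          rw [Set.ncard_coe_finset, hcard]
    _ ≤ S.ncard := by
        apply Set.ncard_le_ncard _ hfin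
        intro x hx
        simp only [Finset.coe_image, Finset.coe_univ, Set.image_univ, Set.mem_range] at hx
        obtain ⟨t, rfl⟩ := hx
        exact hfS t
  omega
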